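/- In a Mal'tsev category, every internal category is an internal groupoid. -/

import Mathlib

open CategoryTheory CategoryTheory.Limits

universe v u v' u'

variable {C : Type u} [Category.{v} C]

/-- An internal relation on an object `X`: a pair of jointly monic morphisms. -/
structure RelOn (X : C) where
  R : C
  r1 : R ⟶ X
  r2 : R ⟶ X
  jmono : ∀ {Z : C} (f g : Z ⟶ R), f ≫ r1 = g ≫ r1 → f ≫ r2 = g ≫ r2 → f = g

namespace RelOn

variable {X : C} (ρ : RelOn X)

def Reflexive : Prop :=
  ∃ δ : X ⟶ ρ.R, δ ≫ ρ.r1 = 𝟙 X ∧ δ ≫ ρ.r2 = 𝟙 X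

def Symmetric : Prop :=
  ∃ σ : ρ.R ⟶ ρ.R, σ ≫ ρ.r1 = ρ.r2 ∧ σ ≫ ρ.r2 = ρ.r1

/-- Transitivity, formulated with generalized elements. -/
def Transitive : Prop :=
  ∀ {Z : C} (a b : Z ⟶ ρ.R), a ≫ ρ.r2 = b ≫ ρ.r1 →
    ∃ t : Z ⟶ ρ.R, t ≫ ρ.r1 = a ≫ ρ.r1 ∧ t ≫ ρ.r2 = b ≫ ρ.r2

def IsEquivalence : Prop := ρ.Reflexive ∧ ρ.Symmetric ∧ ρ.Transitive

/-- The relation is effective: it is the kernel pair of some morphism. -/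
def Effective : Prop :=
  ∃ (Y : C) (f : X ⟶ Y) (h : ρ.r1 ≫ f = ρ.r2 ≫ f),
    Nonempty (IsLimit (PullbackCone.mk ρ.r1 ρ.r2 h))

end RelOn

/-- A Mal'tsev category: every internal reflexive relation is an equivalence relation. -/
class MaltsevCat (C : Type u) [Category.{v} C] : Prop where
  refl_is_equiv : ∀ {X : C} (ρ : RelOn X), ρ.Reflexive → ρ.Symmetric ∧ ρ.Transitive

/-- A regular category: finitely complete, coequalizers of kernel pairs,
pullback-stable regular epimorphisms. -/
class RegularCat (C : Type u) [Category.{v} C] : Prop where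
  hasFiniteLimits : HasFiniteLimits C
  hasCoeqOfKernelPair : ∀ {A B R : C} (f : A ⟶ B) (p1 p2 : R ⟶ A) (h : p1 ≫ f = p2 ≫ f),
    Nonempty (IsLimit (PullbackCone.mk p1 p2 h)) → HasCoequalizer p1 p2
  regEpiStable : ∀ {P A B Z : C} (f : A ⟶ B) (g : Z ⟶ B) (p1 : P ⟶ A) (p2 : P ⟶ Z)
    (h : p1 ≫ f = p2 ≫ g), Nonempty (IsLimit (PullbackCone.mk p1 p2 h)) →
    Nonempty (RegularEpi f) → Nonempty (RegularEpi p2)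

/-- A Barr-exact category: regular and every equivalence relation is effective. -/
class ExactCat (C : Type u) [Category.{v} C] extends RegularCat C : Prop where
  effective : ∀ {X : C} (ρ : RelOn X), ρ.IsEquivalence → ρ.Effective

/-- An internal reflexive graph. -/
structure ReflexiveGraph (C : Type u) [Category.{v} C] where
  C1 : C
  C0 : C
  d : C1 ⟶ C0
  c : C1 ⟶ C0
  e : C0 ⟶ C1
  ed : e ≫ d = 𝟙 C0
  ec : e ≫ c = 𝟙 C0

/-- An internal category structure on a reflexive graph, formulated via
generalized elements (equivalent to the usual pullback formulation in a
finitely complete category). `comp a b _` is the composite "`a` followed by `b`". -/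
structure CatStruct {C : Type u} [Category.{v} C] (G : ReflexiveGraph C) where
  comp : ∀ {Z : C} (a b : Z ⟶ G.C1), a ≫ G.c = b ≫ G.d → (Z ⟶ G.C1)
  comp_natural : ∀ {W Z : C} (w : W ⟶ Z) (a b : Z ⟶ G.C1) (h : a ≫ G.c = b ≫ G.d)
      (h' : (w ≫ a) ≫ G.c = (w ≫ b) ≫ G.d),
      w ≫ comp a b h = comp (w ≫ a) (w ≫ b) h'
  comp_d : ∀ {Z : C} (a b : Z ⟶ G.C1) (h : a ≫ G.c = b ≫ G.d), comp a b h ≫ G.d = a ≫ G.d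
  comp_c : ∀ {Z : C} (a b : Z ⟶ G.C1) (h : a ≫ G.c = b ≫ G.d), comp a b h ≫ G.c = b ≫ G.c
  comp_unit_l : ∀ {Z : C} (a : Z ⟶ G.C1) (h : (a ≫ G.d ≫ G.e) ≫ G.c = a ≫ G.d),
      comp (a ≫ G.d ≫ G.e) a h = a
  comp_unit_r : ∀ {Z : C} (a : Z ⟶ G.C1) (h : a ≫ G.c = (a ≫ G.c ≫ G.e) ≫ G.d),
      comp a (a ≫ G.c ≫ G.e) h = a
  comp_assoc : ∀ {Z : C} (a b c' : Z ⟶ G.C1) (h1 : a ≫ G.c = b ≫ G.d)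
      (h2 : b ≫ G.c = c' ≫ G.d)
      (h3 : comp a b h1 ≫ G.c = c' ≫ G.d)
      (h4 : a ≫ G.c = comp b c' h2 ≫ G.d),
      comp (comp a b h1) c' h3 = comp a (comp b c' h2) h4

/-- The internal category has inverses, i.e. is an internal groupoid. -/
def CatStruct.HasInverses {C : Type u} [Category.{v} C] {G : ReflexiveGraph C}
    (S : CatStruct G) : Prop :=
  ∃ i : G.C1 ⟶ G.C1, i ≫ G.d = G.c ∧ i ≫ G.c = G.d ∧
    (∀ {Z : C} (a : Z ⟶ G.C1) (h : a ≫ G.c = (a ≫ i) ≫ G.d),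
      S.comp a (a ≫ i) h = a ≫ G.d ≫ G.e) ∧
    (∀ {Z : C} (a : Z ⟶ G.C1) (h : (a ≫ i) ≫ G.c = a ≫ G.d),
      S.comp (a ≫ i) a h = a ≫ G.c ≫ G.e)

/-- An internal groupoid. -/
structure GroupoidObj (C : Type u) [Category.{v} C] where
  graph : ReflexiveGraph C
  str : CatStruct graph
  hasInv : str.HasInverses

/-- Internal functors between internal groupoids. -/
@[ext]
structure GrpdHom (A B : GroupoidObj C) where
  f0 : A.graph.C0 ⟶ B.graph.C0
  f1 : A.graph.C1 ⟶ B.graph.C1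
  hd : f1 ≫ B.graph.d = A.graph.d ≫ f0
  hc : f1 ≫ B.graph.c = A.graph.c ≫ f0
  he : A.graph.e ≫ f1 = f0 ≫ B.graph.e
  hm : ∀ {Z : C} (a b : Z ⟶ A.graph.C1) (h : a ≫ A.graph.c = b ≫ A.graph.d)
      (h' : (a ≫ f1) ≫ B.graph.c = (b ≫ f1) ≫ B.graph.d),
      A.str.comp a b h ≫ f1 = B.str.comp (a ≫ f1) (b ≫ f1) h'

lemma GrpdHom.cond {A B : GroupoidObj C} (f : GrpdHom A B) {Z : C} {a b : Z ⟶ A.graph.C1}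
    (h : a ≫ A.graph.c = b ≫ A.graph.d) :
    (a ≫ f.f1) ≫ B.graph.c = (b ≫ f.f1) ≫ B.graph.d := by
  rw [Category.assoc, f.hc, Category.assoc, f.hd, ← Category.assoc, h, Category.assoc]

def GrpdHom.id (A : GroupoidObj C) : GrpdHom A A where
  f0 := 𝟙 _
  f1 := 𝟙 _
  hd := by simp
  hc := by simp
  he := by simp
  hm := by intros; simp

def GrpdHom.comp {A B D : GroupoidObj C} (f : GrpdHom A B) (g : GrpdHom B D) : GrpdHom A D where
  f0 := f.f0 ≫ g.f0
  f1 := f.f1 ≫ g.f1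
  hd := by rw [Category.assoc, g.hd, ← Category.assoc, f.hd, Category.assoc]
  hc := by rw [Category.assoc, g.hc, ← Category.assoc, f.hc, Category.assoc]
  he := by rw [← Category.assoc, f.he, Category.assoc, g.he, ← Category.assoc]
  hm := by
    intro Z a b h h'
    rw [← Category.assoc, f.hm a b h (f.cond h), g.hm _ _ (f.cond h) (g.cond (f.cond h))]
    simp only [Category.assoc]

instance : Category (GroupoidObj C) where
  Hom := GrpdHom
  id := GrpdHom.id
  comp := GrpdHom.comp
  id_comp f := by apply GrpdHom.ext <;> simp [GrpdHom.comp, GrpdHom.id]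
  comp_id f := by apply GrpdHom.ext <;> simp [GrpdHom.comp, GrpdHom.id]
  assoc f g h := by apply GrpdHom.ext <;> simp [GrpdHom.comp]

/-- Coerce a morphism of internal groupoids to its underlying data. -/
def homToGrpdHom {A B : GroupoidObj C} (f : A ⟶ B) : GrpdHom A B := f

/-- Morphisms of reflexive graphs. -/
@[ext]
structure RGHom (A B : ReflexiveGraph C) where
  f0 : A.C0 ⟶ B.C0
  f1 : A.C1 ⟶ B.C1
  hd : f1 ≫ B.d = A.d ≫ f0
  hc : f1 ≫ B.c = A.c ≫ f0
  he : A.e ≫ f1 = f0 ≫ B.e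

instance : Category (ReflexiveGraph C) where
  Hom := RGHom
  id A := ⟨𝟙 _, 𝟙 _, by simp, by simp, by simp⟩
  comp f g := ⟨f.f0 ≫ g.f0, f.f1 ≫ g.f1,
    by rw [Category.assoc, g.hd, ← Category.assoc, f.hd, Category.assoc],
    by rw [Category.assoc, g.hc, ← Category.assoc, f.hc, Category.assoc],
    by rw [← Category.assoc, f.he, Category.assoc, g.he, ← Category.assoc]⟩
  id_comp f := by apply RGHom.ext <;> simp
  comp_id f := by apply RGHom.ext <;> simp
  assoc f g h := by apply RGHom.ext <;> simp

def homToRGHom {A B : ReflexiveGraph C} (f : A ⟶ B) : RGHom A B := f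

/-- The forgetful functor from internal groupoids to reflexive graphs. -/
def forgetToRG (C : Type u) [Category.{v} C] : GroupoidObj C ⥤ ReflexiveGraph C where
  obj A := A.graph
  map f := ⟨(homToGrpdHom f).f0, (homToGrpdHom f).f1, (homToGrpdHom f).hd,
    (homToGrpdHom f).hc, (homToGrpdHom f).he⟩
  map_id A := by apply RGHom.ext <;> rfl
  map_comp f g := by apply RGHom.ext <;> rfl

/-- A discrete internal groupoid: the unit is an isomorphism. -/
def GroupoidObj.IsDiscrete (A : GroupoidObj C) : Prop := IsIso A.graph.e

/-- An internal double groupoid (an internal groupoid in internal groupoids) is a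
2-groupoid when its groupoid of objects is discrete. -/
def Is2Grpd (D : GroupoidObj (GroupoidObj C)) : Prop := D.graph.C0.IsDiscrete

/-- Zero morphisms, defined without extra structure: morphisms factoring through a
zero object. -/
def IsZeroMor {A B : C} (f : A ⟶ B) : Prop :=
  ∃ (Z : C) (_ : IsZero Z) (g : A ⟶ Z) (h : Z ⟶ B), f = g ≫ h

/-- `κ` is a kernel of `α`. -/
def IsKernelOf {A B K : C} (κ : K ⟶ A) (α : A ⟶ B) : Prop :=
  IsZeroMor (κ ≫ α) ∧ ∀ {Z : C} (g : Z ⟶ A), IsZeroMor (g ≫ α) → ∃! l : Z ⟶ K, l ≫ κ = g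

/-- A split extension with kernel object `Xo`. -/
structure SplitExtOn (Xo : C) where
  A : C
  B : C
  κ : Xo ⟶ A
  α : A ⟶ B
  β : B ⟶ A
  split : β ≫ α = 𝟙 B
  ker : IsKernelOf κ α

/-- A generic split extension with kernel `Xo`: terminal among split extensions
with kernel `Xo` (morphisms being the identity on the kernel). -/
def IsGenericSplitExt {Xo : C} (E : SplitExtOn Xo) : Prop :=
  ∀ E' : SplitExtOn Xo, ∃! vw : (E'.A ⟶ E.A) × (E'.B ⟶ E.B),
    E'.κ ≫ vw.1 = E.κ ∧ vw.1 ≫ E.α = E'.α ≫ vw.2 ∧ E'.β ≫ vw.1 = vw.2 ≫ E.β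

/-- Action representability: every object admits a generic split extension. -/
def ActionRepresentable (C : Type u) [Category.{v} C] : Prop :=
  ∀ X : C, ∃ E : SplitExtOn X, IsGenericSplitExt E

/-- A protoadditive functor: preserves kernels of split epimorphisms. -/
def Protoadditive {X : Type u'} [Category.{v'} X] (H : X ⥤ C) : Prop :=
  ∀ {A B K : X} (α : A ⟶ B) (β : B ⟶ A), β ≫ α = 𝟙 B →
    ∀ (κ : K ⟶ A), IsKernelOf κ α → IsKernelOf (H.map κ) (H.map α)

/-- A semi-abelian category: pointed, Barr-exact, protomodular (split short five
lemma), with binary coproducts. -/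
class SemiAbelian (C : Type u) [Category.{v} C] extends ExactCat C : Prop where
  hasZeroObject : HasZeroObject C
  hasBinaryCoproducts : HasBinaryCoproducts C
  ssfl : ∀ {A B B' Co : C} (k : A ⟶ B) (p : B ⟶ Co) (s : Co ⟶ B)
      (k' : A ⟶ B') (p' : B' ⟶ Co) (s' : Co ⟶ B') (b : B ⟶ B'),
      s ≫ p = 𝟙 Co → s' ≫ p' = 𝟙 Co → IsKernelOf k p → IsKernelOf k' p' →
      k ≫ b = k' → b ≫ p' = p → s ≫ b = s' → IsIso b

/-- A natural Mal'tsev operation on a category with binary products. -/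
def IsNaturallyMaltsev (C : Type u) [Category.{v} C] [HasBinaryProducts C] : Prop :=
  ∃ p : ∀ A : C, (A ⨯ A) ⨯ A ⟶ A,
    (∀ {A B : C} (f : A ⟶ B), prod.map (prod.map f f) f ≫ p B = p A ≫ f) ∧
    (∀ A : C, prod.lift (prod.lift prod.fst prod.snd) prod.snd ≫ p A
        = (prod.fst : A ⨯ A ⟶ A)) ∧
    (∀ A : C, prod.lift (prod.lift prod.fst prod.fst) prod.snd ≫ p A
        = (prod.snd : A ⨯ A ⟶ A))


section MaltsevAux

variable {C : Type u} [Category.{v} C]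

lemma CatStruct.comp_congr {G : ReflexiveGraph C} (S : CatStruct G) {Z : C}
    {a a' b b' : Z ⟶ G.C1} (ha : a = a') (hb : b = b')
    (h : a ≫ G.c = b ≫ G.d) (h' : a' ≫ G.c = b' ≫ G.d) :
    S.comp a b h = S.comp a' b' h' := by subst ha; subst hb; rfl

/-- Difunctionality of an arbitrary jointly monic span in a Mal'tsev category. -/
lemma maltsev_difunctional [HasFiniteLimits C] [MaltsevCat C]
    {X Y R : C} (r1 : R ⟶ X) (r2 : R ⟶ Y)
    (jm : ∀ {Z : C} (f g : Z ⟶ R), f ≫ r1 = g ≫ r1 → f ≫ r2 = g ≫ r2 → f = g)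
    {Z : C} (u v w : Z ⟶ R) (h1 : w ≫ r1 = u ≫ r1) (h2 : w ≫ r2 = v ≫ r2) :
    ∃ w' : Z ⟶ R, w' ≫ r1 = v ≫ r1 ∧ w' ≫ r2 = u ≫ r2 := by
  -- `pullback r1 r1` consists of pairs (u, w) with u ≫ r1 = w ≫ r1;
  -- the relation object consists of triples ((u, w), v) with w ≫ r2 = v ≫ r2.
  have jmono : ∀ {W : C} (f g : W ⟶ pullback (pullback.snd r1 r1 ≫ r2) r2),
      f ≫ (pullback.fst (pullback.snd r1 r1 ≫ r2) r2 ≫ pullback.fst r1 r1)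
        = g ≫ (pullback.fst (pullback.snd r1 r1 ≫ r2) r2 ≫ pullback.fst r1 r1) →
      f ≫ pullback.snd (pullback.snd r1 r1 ≫ r2) r2
        = g ≫ pullback.snd (pullback.snd r1 r1 ≫ r2) r2 → f = g := by
    intro W f g hf1 hf2
    have hw : (f ≫ pullback.fst (pullback.snd r1 r1 ≫ r2) r2) ≫ pullback.snd r1 r1
        = (g ≫ pullback.fst (pullback.snd r1 r1 ≫ r2) r2) ≫ pullback.snd r1 r1 := by
      apply jm
      · simp only [Category.assoc]
        rw [← pullback.condition (f := r1) (g := r1)]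
        simpa only [Category.assoc] using congrArg (fun t => t ≫ r1) hf1
      · simp only [Category.assoc]
        rw [pullback.condition (f := pullback.snd r1 r1 ≫ r2) (g := r2)]
        simpa only [Category.assoc] using congrArg (fun t => t ≫ r2) hf2
    apply pullback.hom_ext _ hf2
    apply pullback.hom_ext
    · simpa only [Category.assoc] using hf1
    · simpa only [Category.assoc] using hw
  have hδS : pullback.lift (𝟙 R) (𝟙 R) rfl ≫ pullback.snd r1 r1 ≫ r2 = 𝟙 R ≫ r2 := by
    rw [← Category.assoc, pullback.lift_snd]
  have hρ : RelOn.Reflexive (X := R)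
      ⟨pullback (pullback.snd r1 r1 ≫ r2) r2,
        pullback.fst (pullback.snd r1 r1 ≫ r2) r2 ≫ pullback.fst r1 r1,
        pullback.snd (pullback.snd r1 r1 ≫ r2) r2,
        fun f g hf1 hf2 => jmono f g hf1 hf2⟩ := by
    refine ⟨pullback.lift (pullback.lift (𝟙 R) (𝟙 R) rfl) (𝟙 R) hδS, ?_, ?_⟩
    · show pullback.lift (pullback.lift (𝟙 R) (𝟙 R) rfl) (𝟙 R) hδS ≫
          (pullback.fst (pullback.snd r1 r1 ≫ r2) r2 ≫ pullback.fst r1 r1) = 𝟙 R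
      rw [← Category.assoc, pullback.lift_fst, pullback.lift_fst]
    · show pullback.lift (pullback.lift (𝟙 R) (𝟙 R) rfl) (𝟙 R) hδS ≫
          pullback.snd (pullback.snd r1 r1 ≫ r2) r2 = 𝟙 R
      rw [pullback.lift_snd]
  obtain ⟨σ, hσ1, hσ2⟩ := (MaltsevCat.refl_is_equiv _ hρ).1
  have hσ1 : σ ≫ (pullback.fst (pullback.snd r1 r1 ≫ r2) r2 ≫ pullback.fst r1 r1)
      = pullback.snd (pullback.snd r1 r1 ≫ r2) r2 := hσ1
  have hσ2 : σ ≫ pullback.snd (pullback.snd r1 r1 ≫ r2) r2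
      = pullback.fst (pullback.snd r1 r1 ≫ r2) r2 ≫ pullback.fst r1 r1 := hσ2
  have hSl : pullback.lift u w h1.symm ≫ pullback.snd r1 r1 ≫ r2 = v ≫ r2 := by
    rw [← Category.assoc, pullback.lift_snd, h2]
  refine ⟨(pullback.lift (pullback.lift u w h1.symm) v hSl ≫ σ) ≫
      (pullback.fst (pullback.snd r1 r1 ≫ r2) r2 ≫ pullback.snd r1 r1), ?_, ?_⟩
  · simp only [Category.assoc]
    rw [← pullback.condition (f := r1) (g := r1)]
    have e := congrArg (fun t => pullback.lift (pullback.lift u w h1.symm) v hSl ≫ t ≫ r1) hσ1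
    simp only [Category.assoc] at e
    rw [e, ← Category.assoc, pullback.lift_snd]
  · simp only [Category.assoc]
    rw [pullback.condition (f := pullback.snd r1 r1 ≫ r2) (g := r2)]
    have e := congrArg (fun t => pullback.lift (pullback.lift u w h1.symm) v hSl ≫ t ≫ r2) hσ2
    simp only [Category.assoc] at e
    rw [e, ← Category.assoc, pullback.lift_fst, ← Category.assoc, pullback.lift_fst]

variable [HasFiniteLimits C] {G : ReflexiveGraph C}

/-- The composition morphism on the object of composable pairs. -/
noncomputable def CatStruct.mm (S : CatStruct G) : pullback G.c G.d ⟶ G.C1 :=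
  S.comp (pullback.fst G.c G.d) (pullback.snd G.c G.d) pullback.condition

lemma pbcomp {Z : C} (w : Z ⟶ pullback G.c G.d) :
    (w ≫ pullback.fst G.c G.d) ≫ G.c = (w ≫ pullback.snd G.c G.d) ≫ G.d := by
  rw [Category.assoc, pullback.condition, Category.assoc]

lemma CatStruct.mm_nat (S : CatStruct G) {Z : C} (w : Z ⟶ pullback G.c G.d) :
    w ≫ S.mm = S.comp (w ≫ pullback.fst G.c G.d) (w ≫ pullback.snd G.c G.d) (pbcomp w) :=
  S.comp_natural w _ _ pullback.condition (pbcomp w)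

lemma CatStruct.mm_lift (S : CatStruct G) {Z : C} (a b : Z ⟶ G.C1) (h : a ≫ G.c = b ≫ G.d) :
    pullback.lift a b h ≫ S.mm = S.comp a b h := by
  rw [S.mm_nat]
  exact S.comp_congr (by simp [prod.lift_fst, prod.lift_snd, pullback.lift_fst, pullback.lift_snd]) (by simp [prod.lift_fst, prod.lift_snd, pullback.lift_fst, pullback.lift_snd]) _ _

/-- Left cancellation for internal categories in Mal'tsev categories. -/
lemma CatStruct.lcancel [MaltsevCat C] (S : CatStruct G) {Z : C} (a b b' : Z ⟶ G.C1)
    (h : a ≫ G.c = b ≫ G.d) (h' : a ≫ G.c = b' ≫ G.d)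
    (heq : S.comp a b h = S.comp a b' h') : b = b' := by
  have jm : ∀ {W : C} (f g : W ⟶ pullback G.c G.d),
      f ≫ prod.lift (pullback.fst G.c G.d) S.mm = g ≫ prod.lift (pullback.fst G.c G.d) S.mm →
      f ≫ pullback.snd G.c G.d = g ≫ pullback.snd G.c G.d → f = g := by
    intro W f g h1 h2
    apply pullback.hom_ext _ h2
    have := congrArg (fun t => t ≫ (prod.fst : G.C1 ⨯ G.C1 ⟶ G.C1)) h1
    simpa [prod.lift_fst, prod.lift_snd, pullback.lift_fst, pullback.lift_snd] using this
  have hdb : b ≫ G.d = b' ≫ G.d := by rw [← h, h']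
  have hv : (b ≫ G.d ≫ G.e) ≫ G.c = b' ≫ G.d := by
    rw [Category.assoc, Category.assoc, G.ec, Category.comp_id, hdb]
  obtain ⟨w', hw1, hw2⟩ := maltsev_difunctional (prod.lift (pullback.fst G.c G.d) S.mm)
    (pullback.snd G.c G.d) jm
    (pullback.lift a b h) (pullback.lift (b ≫ G.d ≫ G.e) b' hv) (pullback.lift a b' h')
    (by
      apply Limits.prod.hom_ext
      · simp [prod.lift_fst, prod.lift_snd, pullback.lift_fst, pullback.lift_snd]
      · simp only [Category.assoc, prod.lift_snd, S.mm_lift]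
        exact heq.symm)
    (by simp [prod.lift_fst, prod.lift_snd, pullback.lift_fst, pullback.lift_snd])
  -- components of w'
  have hw1a : w' ≫ pullback.fst G.c G.d = b ≫ G.d ≫ G.e := by
    have := congrArg (fun t => t ≫ (prod.fst : G.C1 ⨯ G.C1 ⟶ G.C1)) hw1
    simpa [prod.lift_fst, prod.lift_snd, pullback.lift_fst, pullback.lift_snd] using this
  have hw2a : w' ≫ pullback.snd G.c G.d = b := by simpa [prod.lift_fst, prod.lift_snd, pullback.lift_fst, pullback.lift_snd] using hw2
  have hw1b : w' ≫ S.mm = pullback.lift (b ≫ G.d ≫ G.e) b' hv ≫ S.mm := by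
    have := congrArg (fun t => t ≫ (prod.snd : G.C1 ⨯ G.C1 ⟶ G.C1)) hw1
    simpa [prod.lift_fst, prod.lift_snd, pullback.lift_fst, pullback.lift_snd] using this
  have hl : w' ≫ S.mm = b := by
    rw [S.mm_nat]
    have : S.comp (w' ≫ pullback.fst G.c G.d) (w' ≫ pullback.snd G.c G.d) (pbcomp w')
        = S.comp (b ≫ G.d ≫ G.e) b (by
          rw [Category.assoc, Category.assoc, G.ec, Category.comp_id]) :=
      S.comp_congr hw1a hw2a _ _
    rw [this]
    exact S.comp_unit_l b _
  have hr : pullback.lift (b ≫ G.d ≫ G.e) b' hv ≫ S.mm = b' := by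
    rw [S.mm_lift]
    have : S.comp (b ≫ G.d ≫ G.e) b' hv = S.comp (b' ≫ G.d ≫ G.e) b' (by
        rw [Category.assoc, Category.assoc, G.ec, Category.comp_id]) :=
      S.comp_congr (by rw [← Category.assoc, hdb, Category.assoc]) rfl _ _
    rw [this]
    exact S.comp_unit_l b' _
  rw [← hl, hw1b, hr]

/-- Right cancellation for internal categories in Mal'tsev categories. -/
lemma CatStruct.rcancel [MaltsevCat C] (S : CatStruct G) {Z : C} (a a' b : Z ⟶ G.C1)
    (h : a ≫ G.c = b ≫ G.d) (h' : a' ≫ G.c = b ≫ G.d)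
    (heq : S.comp a b h = S.comp a' b h') : a = a' := by
  have jm : ∀ {W : C} (f g : W ⟶ pullback G.c G.d),
      f ≫ prod.lift (pullback.snd G.c G.d) S.mm = g ≫ prod.lift (pullback.snd G.c G.d) S.mm →
      f ≫ pullback.fst G.c G.d = g ≫ pullback.fst G.c G.d → f = g := by
    intro W f g h1 h2
    apply pullback.hom_ext h2
    have := congrArg (fun t => t ≫ (prod.fst : G.C1 ⨯ G.C1 ⟶ G.C1)) h1
    simpa [prod.lift_fst, prod.lift_snd, pullback.lift_fst, pullback.lift_snd] using this
  have hca : a ≫ G.c = a' ≫ G.c := by rw [h, h']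
  have hv : a' ≫ G.c = (a' ≫ G.c ≫ G.e) ≫ G.d := by
    rw [Category.assoc, Category.assoc, G.ed, Category.comp_id]
  obtain ⟨w', hw1, hw2⟩ := maltsev_difunctional (prod.lift (pullback.snd G.c G.d) S.mm)
    (pullback.fst G.c G.d) jm
    (pullback.lift a b h) (pullback.lift a' (a' ≫ G.c ≫ G.e) hv) (pullback.lift a' b h')
    (by
      apply Limits.prod.hom_ext
      · simp [prod.lift_fst, prod.lift_snd, pullback.lift_fst, pullback.lift_snd]
      · simp only [Category.assoc, prod.lift_snd, S.mm_lift]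
        exact heq.symm)
    (by simp [prod.lift_fst, prod.lift_snd, pullback.lift_fst, pullback.lift_snd])
  have hw1a : w' ≫ pullback.snd G.c G.d = a' ≫ G.c ≫ G.e := by
    have := congrArg (fun t => t ≫ (prod.fst : G.C1 ⨯ G.C1 ⟶ G.C1)) hw1
    simpa [prod.lift_fst, prod.lift_snd, pullback.lift_fst, pullback.lift_snd] using this
  have hw2a : w' ≫ pullback.fst G.c G.d = a := by simpa [prod.lift_fst, prod.lift_snd, pullback.lift_fst, pullback.lift_snd] using hw2
  have hw1b : w' ≫ S.mm = pullback.lift a' (a' ≫ G.c ≫ G.e) hv ≫ S.mm := by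
    have := congrArg (fun t => t ≫ (prod.snd : G.C1 ⨯ G.C1 ⟶ G.C1)) hw1
    simpa [prod.lift_fst, prod.lift_snd, pullback.lift_fst, pullback.lift_snd] using this
  have hl : w' ≫ S.mm = a := by
    rw [S.mm_nat]
    have : S.comp (w' ≫ pullback.fst G.c G.d) (w' ≫ pullback.snd G.c G.d) (pbcomp w')
        = S.comp a (a ≫ G.c ≫ G.e) (by
          rw [Category.assoc, Category.assoc, G.ed, Category.comp_id]) :=
      S.comp_congr hw2a (by rw [hw1a, ← Category.assoc, ← hca, Category.assoc]) _ _
    rw [this]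
    exact S.comp_unit_r a _
  have hr : pullback.lift a' (a' ≫ G.c ≫ G.e) hv ≫ S.mm = a' := by
    rw [S.mm_lift]
    exact S.comp_unit_r a' _
  rw [← hl, hw1b, hr]

end MaltsevAux

/-- In a Mal'tsev category, every internal category is an internal
groupoid. -/
theorem stmt2 {C : Type u} [Category.{v} C] [HasFiniteLimits C] [MaltsevCat C]
    (G : ReflexiveGraph C) (S : CatStruct G) : S.HasInverses := by
  classical
  -- the relation (p1, mm) on C1 is reflexive and jointly monic; symmetry gives inversion
  have jmono : ∀ {W : C} (f g : W ⟶ pullback G.c G.d),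
      f ≫ pullback.fst G.c G.d = g ≫ pullback.fst G.c G.d →
      f ≫ S.mm = g ≫ S.mm → f = g := by
    intro W f g h1 h2
    apply pullback.hom_ext h1
    rw [S.mm_nat f, S.mm_nat g] at h2
    exact S.lcancel (f ≫ pullback.fst G.c G.d) (f ≫ pullback.snd G.c G.d)
      (g ≫ pullback.snd G.c G.d) (pbcomp f) (by rw [h1]; exact pbcomp g)
      (h2.trans (S.comp_congr h1.symm rfl _ _))
  have hδc : (𝟙 G.C1) ≫ G.c = (G.c ≫ G.e) ≫ G.d := by
    rw [Category.id_comp, Category.assoc, G.ed, Category.comp_id]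
  have hδ : RelOn.Reflexive (X := G.C1)
      ⟨pullback G.c G.d, pullback.fst G.c G.d, S.mm, fun f g h1 h2 => jmono f g h1 h2⟩ := by
    refine ⟨pullback.lift (𝟙 G.C1) (G.c ≫ G.e) hδc, by simp [prod.lift_fst, prod.lift_snd, pullback.lift_fst, pullback.lift_snd], ?_⟩
    show pullback.lift (𝟙 G.C1) (G.c ≫ G.e) hδc ≫ S.mm = 𝟙 G.C1
    rw [S.mm_lift]
    have : S.comp (𝟙 G.C1) (G.c ≫ G.e) hδc
        = S.comp (𝟙 G.C1) (𝟙 G.C1 ≫ G.c ≫ G.e) (by simpa using hδc) :=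
      S.comp_congr rfl (by rw [Category.id_comp]) _ _
    rw [this]
    exact S.comp_unit_r (𝟙 G.C1) _
  obtain ⟨σ, hσ1, hσ2⟩ := (MaltsevCat.refl_is_equiv _ hδ).1
  have hσ1 : σ ≫ pullback.fst G.c G.d = S.mm := hσ1
  have hσ2 : σ ≫ S.mm = pullback.fst G.c G.d := hσ2
  have hjc : (G.d ≫ G.e) ≫ G.c = (𝟙 G.C1) ≫ G.d := by
    rw [Category.assoc, G.ec, Category.comp_id, Category.id_comp]
  set j : G.C1 ⟶ pullback G.c G.d := pullback.lift (G.d ≫ G.e) (𝟙 G.C1) hjc with hj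
  set s : G.C1 ⟶ pullback G.c G.d := j ≫ σ with hs
  set i : G.C1 ⟶ G.C1 := s ≫ pullback.snd G.c G.d with hi
  have hs1 : s ≫ pullback.fst G.c G.d = 𝟙 G.C1 := by
    rw [hs, Category.assoc, hσ1, S.mm_lift]
    have : S.comp (G.d ≫ G.e) (𝟙 G.C1) hjc
        = S.comp (𝟙 G.C1 ≫ G.d ≫ G.e) (𝟙 G.C1) (by simpa using hjc) :=
      S.comp_congr (by rw [Category.id_comp]) rfl _ _
    rw [this]
    exact S.comp_unit_l (𝟙 G.C1) _
  have hs2 : s ≫ S.mm = G.d ≫ G.e := by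
    rw [hs, Category.assoc, hσ2, hj, pullback.lift_fst]
  have hid : i ≫ G.d = G.c := by
    rw [hi, Category.assoc, ← pullback.condition, ← Category.assoc, hs1, Category.id_comp]
  have hic : i ≫ G.c = G.d := by
    have h1 : s ≫ S.mm ≫ G.c = G.d := by
      rw [← Category.assoc, hs2, Category.assoc, G.ec, Category.comp_id]
    have h2 : S.mm ≫ G.c = pullback.snd G.c G.d ≫ G.c :=
      S.comp_c _ _ pullback.condition
    rw [h2, ← Category.assoc] at h1
    rw [hi]
    exact h1
  -- the right-inverse law
  have invr : ∀ {Z : C} (a : Z ⟶ G.C1) (h : a ≫ G.c = (a ≫ i) ≫ G.d),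
      S.comp a (a ≫ i) h = a ≫ G.d ≫ G.e := by
    intro Z a h
    calc S.comp a (a ≫ i) h
        = S.comp ((a ≫ s) ≫ pullback.fst G.c G.d) ((a ≫ s) ≫ pullback.snd G.c G.d)
          (pbcomp (a ≫ s)) :=
          S.comp_congr (by rw [Category.assoc, hs1, Category.comp_id])
            (by rw [hi]; exact (Category.assoc a s (pullback.snd G.c G.d)).symm) _ _
      _ = (a ≫ s) ≫ S.mm := (S.mm_nat (a ≫ s)).symm
      _ = a ≫ G.d ≫ G.e := by rw [Category.assoc, hs2]
  refine ⟨i, hid, hic, invr, ?_⟩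
  -- the left-inverse law, via associativity and right cancellation
  intro Z a h
  have hgd : (a ≫ i) ≫ G.d = a ≫ G.c := by rw [Category.assoc, hid]
  have hgc : (a ≫ i) ≫ G.c = a ≫ G.d := by rw [Category.assoc, hic]
  have hinvr : a ≫ G.c = (a ≫ i) ≫ G.d := hgd.symm
  have hXc : S.comp (a ≫ i) a h ≫ G.c = (a ≫ i) ≫ G.d := by
    rw [S.comp_c, hgd]
  have hYc : (a ≫ G.c ≫ G.e) ≫ G.c = (a ≫ i) ≫ G.d := by
    rw [Category.assoc, Category.assoc, G.ec, Category.comp_id, hgd]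
  apply S.rcancel _ _ (a ≫ i) hXc hYc
  have h4 : (a ≫ i) ≫ G.c = S.comp a (a ≫ i) hinvr ≫ G.d := by
    rw [S.comp_d, hgc]
  have hassoc := S.comp_assoc (a ≫ i) a (a ≫ i) h hinvr hXc h4
  rw [hassoc]
  have hstep : S.comp a (a ≫ i) hinvr = (a ≫ i) ≫ G.c ≫ G.e := by
    rw [invr a hinvr, ← Category.assoc, ← hgc, Category.assoc]
  have hL : S.comp (a ≫ i) (S.comp a (a ≫ i) hinvr) h4 = a ≫ i := by
    have : S.comp (a ≫ i) (S.comp a (a ≫ i) hinvr) h4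
        = S.comp (a ≫ i) ((a ≫ i) ≫ G.c ≫ G.e) (by rw [← hstep]; exact h4) :=
      S.comp_congr rfl hstep _ _
    rw [this]
    exact S.comp_unit_r (a ≫ i) _
  have hR : S.comp (a ≫ G.c ≫ G.e) (a ≫ i) hYc = a ≫ i := by
    have harg : a ≫ G.c ≫ G.e = (a ≫ i) ≫ G.d ≫ G.e := by
      rw [← Category.assoc, ← hgd, Category.assoc]
    have : S.comp (a ≫ G.c ≫ G.e) (a ≫ i) hYc
        = S.comp ((a ≫ i) ≫ G.d ≫ G.e) (a ≫ i) (by rw [← harg]; exact hYc) :=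
      S.comp_congr harg rfl _ _
    rw [this]
    exact S.comp_unit_l (a ≫ i) _
  rw [hL, hR]
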